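/- Let α ∈ (0,1] and τx, τy > 0. Then κ* = α τx / (α τx + τy) is the unique real number κ such that for all x, y ∈ ℝ, writing m = (τx·x + τy·y)/(τx + τy), the identity α·m + (1−α)·(κ·m + (1−κ)·y) = κ·x + (1−κ)·y holds. -/
import Mathlib


/-- Continuum-game symmetric linear Nash equilibrium weight (Morris–Shin): `κ*` is
the unique fixed point of the best-response map for linear strategies. -/
theorem stmt3 (α : ℝ) (hα0 : 0 < α) (hα1 : α ≤ 1)
    (τx τy : ℝ) (hτx : 0 < τx) (hτy : 0 < τy)
    (κstar : ℝ) (hκstar : κstar = α * τx / (α * τx + τy)) :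
    ∀ κ : ℝ,
      (∀ x y : ℝ,
        α * ((τx * x + τy * y) / (τx + τy)) +
          (1 - α) * (κ * ((τx * x + τy * y) / (τx + τy)) + (1 - κ) * y)
        = κ * x + (1 - κ) * y)
      ↔ κ = κstar := by
  have hsum : τx + τy ≠ 0 := by positivity
  have hden : α * τx + τy ≠ 0 := by positivity
  intro κ
  constructor
  · intro h
    have h1 := h 1 0
    rw [hκstar]
    field_simp at h1 ⊢
    nlinarith [h1]
  · intro h
    subst h hκstar
    intro x y
    field_simp
    ring
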